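/- arXiv:1307.4718 — 2 statements merged into one kernel-verified Lean document; each statement's English description precedes it below -/
import Mathlib

section
/- Let μ be a probability measure on Γ(ℝⁿ) whose correlation functions satisfy the Ruelle bound ‖k_m‖_∞ ≤ ζ^m for all m ∈ ℕ and some ζ > 0. Then for every f ∈ C₀(ℝⁿ) (continuous with compact support) and every m ∈ ℕ, ∫_{Γ(ℝⁿ)} |⟨f,γ⟩|^m dμ(γ) < ∞, where ⟨f,γ⟩ := Σ_{x∈γ} f(x). -/
open MeasureTheory ENNReal

private lemma pow_le_descFac (N m : ℕ) :
    N ^ m ≤ (2*m)^m + 2^m * N.descFactorial m := by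
  rcases le_or_gt N (2*m) with h | h
  · exact le_trans (Nat.pow_le_pow_left h m) (Nat.le_add_right _ _)
  · refine le_trans ?_ (Nat.le_add_left _ _)
    calc N ^ m ≤ (2 * (N - m)) ^ m := by
          apply Nat.pow_le_pow_left; omega
      _ = 2 ^ m * (N - m) ^ m := by rw [Nat.mul_pow]
      _ ≤ 2 ^ m * N.descFactorial m := by
          apply Nat.mul_le_mul_left
          calc (N - m)^m ≤ (N + 1 - m)^m := by apply Nat.pow_le_pow_left; omega
            _ ≤ N.descFactorial m := Nat.pow_sub_le_descFactorial N m

/-- The space of locally finite configurations in `ℝⁿ`. -/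
def Config (n : ℕ) : Type :=
  {γ : Set (EuclideanSpace ℝ (Fin n)) //
    ∀ K : Set (EuclideanSpace ℝ (Fin n)), IsCompact K → (γ ∩ K).Finite}

theorem stmt6 {n : ℕ} [MeasurableSpace (Config n)]
    (μ : Measure (Config n)) [IsProbabilityMeasure μ]
    (k : (m : ℕ) → (Fin m → EuclideanSpace ℝ (Fin n)) → ℝ≥0∞)
    (ζ : ℝ) (hζ : 0 < ζ)
    (hkbdd : ∀ m, 1 ≤ m → ∀ᵐ t : Fin m → EuclideanSpace ℝ (Fin n),
      k m t ≤ ENNReal.ofReal (ζ ^ m))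
    (hcorr : ∀ m, 1 ≤ m →
      ∀ g : (Fin m → EuclideanSpace ℝ (Fin n)) → ℝ≥0∞, Measurable g →
      (∀ (pp : Equiv.Perm (Fin m)) t, g (t ∘ pp) = g t) →
      ∫⁻ γ : Config n,
          (∑' t : {t : Fin m → EuclideanSpace ℝ (Fin n) //
              Function.Injective t ∧ ∀ i, t i ∈ γ.1}, g t.1) ∂μ
        = ∫⁻ t : Fin m → EuclideanSpace ℝ (Fin n), g t * k m t) :
    ∀ f : EuclideanSpace ℝ (Fin n) → ℝ, Continuous f → HasCompactSupport f →
    ∀ m : ℕ,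
      ∫⁻ γ : Config n, ENNReal.ofReal (|∑' x : γ.1, f x| ^ m) ∂μ < ⊤ := by
  intro f hfc hfs m
  rcases Nat.eq_zero_or_pos m with rfl | hm
  · simp
  -- notation
  set K : Set (EuclideanSpace ℝ (Fin n)) := tsupport f with hKdef
  have hK : IsCompact K := hfs
  have hKm : MeasurableSet K := (isClosed_tsupport f).measurableSet
  obtain ⟨C₀, hC₀⟩ := hfs.exists_bound_of_continuous hfc
  set C : ℝ := max C₀ 0 with hCdef
  have hC0 : 0 ≤ C := le_max_right _ _
  have hCb : ∀ x, |f x| ≤ C := fun x => le_trans (hC₀ x) (le_max_left _ _)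
  -- the symmetric test function
  set P : Set (Fin m → EuclideanSpace ℝ (Fin n)) := Set.pi Set.univ (fun _ => K) with hPdef
  have hPm : MeasurableSet P := MeasurableSet.univ_pi fun _ => hKm
  set g : (Fin m → EuclideanSpace ℝ (Fin n)) → ℝ≥0∞ := P.indicator 1 with hgdef
  have hgmeas : Measurable g := measurable_one.indicator hPm
  have hsym : ∀ (pp : Equiv.Perm (Fin m)) t, g (t ∘ pp) = g t := by
    intro pp t
    rw [hgdef]
    have : (t ∘ pp) ∈ P ↔ t ∈ P := by
      simp only [hPdef, Set.mem_pi, Set.mem_univ, forall_true_left, Function.comp_apply]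
      exact ⟨fun h i => by simpa using h (pp.symm i), fun h i => h _⟩
    by_cases ht : t ∈ P
    · rw [Set.indicator_of_mem (this.2 ht), Set.indicator_of_mem ht]
      rfl
    · rw [Set.indicator_of_notMem (fun h => ht (this.1 h)),
        Set.indicator_of_notMem ht]
  have hint := hcorr m hm g hgmeas hsym
  -- abbreviation for the tsum
  set D : Config n → ℝ≥0∞ := fun γ =>
    ∑' t : {t : Fin m → EuclideanSpace ℝ (Fin n) // Function.Injective t ∧ ∀ i, t i ∈ γ.1}, g t.1 with hDdef
  -- bound the correlation integral
  have hD_int : ∫⁻ γ, D γ ∂μ ≤ ENNReal.ofReal (ζ^m) * (volume K)^m := by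
    rw [hint]
    calc ∫⁻ t, g t * k m t
        ≤ ∫⁻ t, g t * ENNReal.ofReal (ζ^m) := by
          refine lintegral_mono_ae ((hkbdd m hm).mono fun t ht => ?_)
          exact mul_le_mul_right ht _
      _ = ENNReal.ofReal (ζ^m) * ∫⁻ t, g t := by
          simp_rw [mul_comm]
          exact lintegral_const_mul' _ _ ofReal_ne_top
      _ = ENNReal.ofReal (ζ^m) * (volume K)^m := by
          rw [hgdef, lintegral_indicator_one hPm, hPdef, volume_pi_pi,
            Finset.prod_const, Finset.card_univ, Fintype.card_fin]
  -- pointwise bound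
  have hpt : ∀ γ : Config n, ENNReal.ofReal (|∑' x : γ.1, f x| ^ m) ≤
      ENNReal.ofReal (C^m) * (((2*m)^m : ℕ) + (2^m : ℕ) * D γ) := by
    intro γ
    have hfin : (γ.1 ∩ K).Finite := γ.2 K hK
    haveI : Fintype ↥(γ.1 ∩ K) := hfin.fintype
    set N : ℕ := (γ.1 ∩ K).ncard with hNdef
    have hNcard : Fintype.card ↥(γ.1 ∩ K) = N := by
      rw [hNdef, ← Nat.card_coe_set_eq, Nat.card_eq_fintype_card]
    -- step 1 : |tsum| ≤ C * N
    have hstep1 : |∑' x : γ.1, f x| ≤ C * N := by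
      have hs : {x : ↥γ.1 | f ↑x ≠ 0}.Finite := by
        refine Set.Finite.subset (hfin.preimage
          (Set.injOn_of_injective Subtype.val_injective)) ?_
        intro x hx
        exact ⟨x.2, subset_tsupport f hx⟩
      have htsum : ∑' x : γ.1, f ↑x = ∑ x ∈ hs.toFinset, f ↑x := by
        refine tsum_eq_sum fun x hx => ?_
        by_contra h
        exact hx (hs.mem_toFinset.2 h)
      have hcard : hs.toFinset.card ≤ N := by
        have := Finset.card_le_card_of_injOn (fun x : ↥γ.1 => (↑x : EuclideanSpace ℝ (Fin n)))
          (s := hs.toFinset) (t := hfin.toFinset)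
          (fun x hx => by
            refine hfin.mem_toFinset.2 ⟨x.2, subset_tsupport f (hs.mem_toFinset.1 hx)⟩)
          (fun a _ b _ h => Subtype.val_injective h)
        exact le_trans this (le_of_eq (Set.ncard_eq_toFinset_card _ hfin).symm)
      calc |∑' x : γ.1, f ↑x| = |∑ x ∈ hs.toFinset, f ↑x| := by rw [htsum]
        _ ≤ ∑ x ∈ hs.toFinset, |f ↑x| := Finset.abs_sum_le_sum_abs _ _
        _ ≤ hs.toFinset.card • C := Finset.sum_le_card_nsmul _ _ C (fun x _ => hCb _)
        _ = hs.toFinset.card * C := nsmul_eq_mul _ _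
        _ ≤ N * C := by
            exact mul_le_mul_of_nonneg_right (Nat.cast_le.2 hcard) hC0
        _ = C * N := mul_comm _ _
    -- step 3 : descFactorial ≤ D γ
    have hstep3 : ((N.descFactorial m : ℕ) : ℝ≥0∞) ≤ D γ := by
      set ι : (Fin m ↪ ↥(γ.1 ∩ K)) →
          {t : Fin m → EuclideanSpace ℝ (Fin n) // Function.Injective t ∧ ∀ i, t i ∈ γ.1} :=
        fun e => ⟨fun i => (e i : EuclideanSpace ℝ (Fin n)), Subtype.val_injective.comp e.injective,
          fun i => (e i).2.1⟩ with hιdef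
      have hι : Function.Injective ι := by
        intro e₁ e₂ h
        refine Function.Embedding.ext fun i => ?_
        exact Subtype.val_injective (congrFun (congrArg Subtype.val h) i)
      have hval : ∀ e, g (ι e).1 = 1 := by
        intro e
        refine Set.indicator_of_mem ?_ _
        intro i _
        exact (e i).2.2
      calc ((N.descFactorial m : ℕ) : ℝ≥0∞)
          = (Fintype.card (Fin m ↪ ↥(γ.1 ∩ K)) : ℝ≥0∞) := by
            rw [Fintype.card_embedding_eq, hNcard, Fintype.card_fin]
        _ = ∑ e : Fin m ↪ ↥(γ.1 ∩ K), (1 : ℝ≥0∞) := by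
            rw [Finset.sum_const, Finset.card_univ, nsmul_eq_mul, mul_one]
        _ = ∑ e : Fin m ↪ ↥(γ.1 ∩ K), g (ι e).1 := by
            exact Finset.sum_congr rfl fun e _ => (hval e).symm
        _ ≤ ∑' e : Fin m ↪ ↥(γ.1 ∩ K), g (ι e).1 := ENNReal.sum_le_tsum _
        _ ≤ D γ := ENNReal.tsum_comp_le_tsum_of_injective hι _
    -- combine
    calc ENNReal.ofReal (|∑' x : γ.1, f x| ^ m)
        ≤ ENNReal.ofReal ((C * N) ^ m) := by
          exact ENNReal.ofReal_le_ofReal (pow_le_pow_left₀ (abs_nonneg _) hstep1 m)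
      _ = ENNReal.ofReal (C ^ m) * ((N ^ m : ℕ) : ℝ≥0∞) := by
          rw [mul_pow, ENNReal.ofReal_mul (pow_nonneg hC0 m)]
          congr 1
          rw [← Nat.cast_pow, ENNReal.ofReal_natCast]
      _ ≤ ENNReal.ofReal (C ^ m) *
            (((2*m)^m : ℕ) + (2^m : ℕ) * ((N.descFactorial m : ℕ) : ℝ≥0∞)) := by
          refine mul_le_mul_right ?_ _
          calc ((N ^ m : ℕ) : ℝ≥0∞)
              ≤ (((2*m)^m + 2^m * N.descFactorial m : ℕ) : ℝ≥0∞) :=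
                Nat.cast_le.2 (pow_le_descFac N m)
            _ = ((2*m)^m : ℕ) + (2^m : ℕ) * ((N.descFactorial m : ℕ) : ℝ≥0∞) := by
                push_cast; ring
      _ ≤ ENNReal.ofReal (C^m) * (((2*m)^m : ℕ) + (2^m : ℕ) * D γ) := by
          exact mul_le_mul_right (add_le_add_right (mul_le_mul_right hstep3 _) _) _
  -- integrate the bound
  have hbound : ∫⁻ γ : Config n, ENNReal.ofReal (|∑' x : γ.1, f x| ^ m) ∂μ ≤
      ENNReal.ofReal (C^m) * (((2*m)^m : ℕ) * μ Set.univ +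
        (2^m : ℕ) * (ENNReal.ofReal (ζ^m) * (volume K)^m)) := by
    calc ∫⁻ γ : Config n, ENNReal.ofReal (|∑' x : γ.1, f x| ^ m) ∂μ
        ≤ ∫⁻ γ, ENNReal.ofReal (C^m) * (((2*m)^m : ℕ) + (2^m : ℕ) * D γ) ∂μ :=
          lintegral_mono hpt
      _ = ENNReal.ofReal (C^m) *
            ∫⁻ γ, (((2*m)^m : ℕ) + (2^m : ℕ) * D γ) ∂μ :=
          lintegral_const_mul' _ _ ofReal_ne_top
      _ = ENNReal.ofReal (C^m) *
            (((2*m)^m : ℕ) * μ Set.univ + ∫⁻ γ, (2^m : ℕ) * D γ ∂μ) := by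
          rw [lintegral_add_left measurable_const, lintegral_const]
      _ = ENNReal.ofReal (C^m) *
            (((2*m)^m : ℕ) * μ Set.univ + (2^m : ℕ) * ∫⁻ γ, D γ ∂μ) := by
          rw [lintegral_const_mul' _ _ (natCast_ne_top _)]
      _ ≤ _ := by
          refine mul_le_mul_right (add_le_add_right (mul_le_mul_right hD_int _) _) _
  refine lt_of_le_of_lt hbound ?_
  refine ENNReal.mul_lt_top ofReal_lt_top ?_
  refine ENNReal.add_lt_top.2 ⟨?_, ?_⟩
  · exact ENNReal.mul_lt_top (natCast_lt_top _) (measure_lt_top μ _)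
  · exact ENNReal.mul_lt_top (natCast_lt_top _)
      (ENNReal.mul_lt_top ofReal_lt_top (pow_lt_top hK.measure_lt_top))
end

section
/- Let (μ_n)_{n∈ℕ} be a sequence of finitely additive set functions on an algebra A₀ of subsets of a set Ω, with values in [0,1] and μ_n(Ω) = 1, which converges pointwise on A₀ to a set function μ. Suppose the family is locally equicontinuous in the sense that for every decreasing sequence B_k ↓ ∅ in A₀, lim_{k→∞} limsup_n μ_n(B_k) = 0. Then μ is finitely additive on A₀ and σ-additive in the sense that μ(B_k) → 0 for every decreasing sequence B_k ↓ ∅ in A₀; hence μ extends uniquely to a probability measure on σ(A₀). -/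
open Filter MeasureTheory
open scoped ENNReal

theorem stmt17 {Ω : Type*} (A₀ : Set (Set Ω))
    (huniv : Set.univ ∈ A₀)
    (hcompl : ∀ B ∈ A₀, Bᶜ ∈ A₀)
    (hunion : ∀ B ∈ A₀, ∀ C ∈ A₀, B ∪ C ∈ A₀)
    (μn : ℕ → Set Ω → ℝ) (μ : Set Ω → ℝ)
    (hrange : ∀ i, ∀ B ∈ A₀, 0 ≤ μn i B ∧ μn i B ≤ 1)
    (htotal : ∀ i, μn i Set.univ = 1)
    (hadd : ∀ i, ∀ B ∈ A₀, ∀ C ∈ A₀, Disjoint B C → μn i (B ∪ C) = μn i B + μn i C)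
    (hconv : ∀ B ∈ A₀, Tendsto (fun i => μn i B) atTop (nhds (μ B)))
    (hLEC : ∀ B : ℕ → Set Ω, (∀ k, B k ∈ A₀) → Antitone B → (⋂ k, B k) = ∅ →
      Tendsto (fun k => limsup (fun i => μn i (B k)) atTop) atTop (nhds 0)) :
    (∀ B ∈ A₀, ∀ C ∈ A₀, Disjoint B C → μ (B ∪ C) = μ B + μ C) ∧
    (∀ B : ℕ → Set Ω, (∀ k, B k ∈ A₀) → Antitone B → (⋂ k, B k) = ∅ →
      Tendsto (fun k => μ (B k)) atTop (nhds 0)) ∧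
    (∃! ν : @Measure Ω (MeasurableSpace.generateFrom A₀),
      @IsProbabilityMeasure Ω (MeasurableSpace.generateFrom A₀) ν ∧
        ∀ B ∈ A₀, ν B = ENNReal.ofReal (μ B)) := by
  -- basic closure properties
  have hempty : (∅ : Set Ω) ∈ A₀ := by simpa using hcompl _ huniv
  have hinter : ∀ B ∈ A₀, ∀ C ∈ A₀, B ∩ C ∈ A₀ := by
    intro B hB C hC
    have := hcompl _ (hunion _ (hcompl _ hB) _ (hcompl _ hC))
    simpa [Set.compl_union, compl_compl] using this
  have hdiffmem : ∀ B ∈ A₀, ∀ C ∈ A₀, B \ C ∈ A₀ := by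
    intro B hB C hC
    simpa [Set.diff_eq] using hinter _ hB _ (hcompl _ hC)
  -- basic values
  have hn_empty : ∀ i, μn i (∅ : Set Ω) = 0 := by
    intro i
    have h := hadd i ∅ hempty ∅ hempty (by simp)
    simp only [Set.union_empty] at h
    linarith
  have hμ_empty : μ (∅ : Set Ω) = 0 := by
    refine tendsto_nhds_unique (hconv _ hempty) ?_
    simpa [hn_empty] using (tendsto_const_nhds : Tendsto (fun _ : ℕ => (0:ℝ)) atTop (nhds 0))
  have hμ_add : ∀ B ∈ A₀, ∀ C ∈ A₀, Disjoint B C → μ (B ∪ C) = μ B + μ C := by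
    intro B hB C hC hdis
    refine tendsto_nhds_unique (hconv _ (hunion _ hB _ hC)) ?_
    exact ((hconv B hB).add (hconv C hC)).congr fun i => (hadd i B hB C hC hdis).symm
  have hμ_nonneg : ∀ B ∈ A₀, 0 ≤ μ B := by
    intro B hB
    exact ge_of_tendsto' (hconv B hB) fun i => (hrange i B hB).1
  have hμ_mono : ∀ B ∈ A₀, ∀ C ∈ A₀, B ⊆ C → μ B ≤ μ C := by
    intro B hB C hC hsub
    have h1 : μ C = μ B + μ (C \ B) := by
      rw [← hμ_add B hB (C \ B) (hdiffmem C hC B hB) disjoint_sdiff_self_right,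
        Set.union_diff_cancel hsub]
    have := hμ_nonneg (C \ B) (hdiffmem C hC B hB)
    linarith
  have hμ_union_le : ∀ B ∈ A₀, ∀ C ∈ A₀, μ (B ∪ C) ≤ μ B + μ C := by
    intro B hB C hC
    have h1 : μ (B ∪ C) = μ B + μ (C \ B) := by
      rw [← hμ_add B hB (C \ B) (hdiffmem C hC B hB) disjoint_sdiff_self_right,
        Set.union_diff_self]
    have := hμ_mono (C \ B) (hdiffmem C hC B hB) C hC Set.diff_subset
    linarith
  have hμ_univ : μ Set.univ = 1 := by
    refine tendsto_nhds_unique (hconv _ huniv) ?_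
    simpa [htotal] using (tendsto_const_nhds : Tendsto (fun _ : ℕ => (1:ℝ)) atTop (nhds 1))
  -- second bullet: σ-additivity in the continuity-at-∅ sense
  have part2 : ∀ B : ℕ → Set Ω, (∀ k, B k ∈ A₀) → Antitone B → (⋂ k, B k) = ∅ →
      Tendsto (fun k => μ (B k)) atTop (nhds 0) := by
    intro B hBmem hBanti hBempty
    refine (hLEC B hBmem hBanti hBempty).congr fun k => ?_
    exact (hconv _ (hBmem k)).limsup_eq
  refine ⟨hμ_add, part2, ?_⟩
  -- third bullet: extension
  -- finite subadditivity over finite unions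
  have hfin : ∀ (f : ℕ → Set Ω), (∀ i, f i ∈ A₀) → ∀ k : ℕ,
      (⋃ i ∈ Finset.range k, f i) ∈ A₀ ∧
      μ (⋃ i ∈ Finset.range k, f i) ≤ ∑ i ∈ Finset.range k, μ (f i) := by
    intro f hf k
    induction k with
    | zero => simpa using ⟨hempty, le_of_eq hμ_empty⟩
    | succ k ih =>
      have hU : (⋃ i ∈ Finset.range (k+1), f i) = (⋃ i ∈ Finset.range k, f i) ∪ f k := by
        rw [Finset.range_add_one]
        simp [Set.biUnion_insert, Set.union_comm]
      constructor
      · rw [hU]; exact hunion _ ih.1 _ (hf k)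
      · rw [hU, Finset.sum_range_succ]
        calc μ ((⋃ i ∈ Finset.range k, f i) ∪ f k)
            ≤ μ (⋃ i ∈ Finset.range k, f i) + μ (f k) := hμ_union_le _ ih.1 _ (hf k)
          _ ≤ (∑ i ∈ Finset.range k, μ (f i)) + μ (f k) := by linarith [ih.2]
  classical
  letI : MeasurableSpace Ω := MeasurableSpace.generateFrom A₀
  set m : Set Ω → ℝ≥0∞ := extend (fun s (_ : s ∈ A₀) => ENNReal.ofReal (μ s)) with hm_def
  have hm_eq : ∀ B ∈ A₀, m B = ENNReal.ofReal (μ B) := fun B hB => extend_eq _ hB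
  have hm_empty : m ∅ = 0 := by rw [hm_eq _ hempty, hμ_empty, ENNReal.ofReal_zero]
  set ν₀ : OuterMeasure Ω := OuterMeasure.ofFunction m hm_empty with hν₀_def
  -- ν₀ agrees with μ on A₀
  have hν₀_eq : ∀ B ∈ A₀, ν₀ B = ENNReal.ofReal (μ B) := by
    intro B hB
    refine le_antisymm ((OuterMeasure.ofFunction_le B).trans (hm_eq B hB).le) ?_
    rw [hν₀_def, OuterMeasure.ofFunction_apply]
    refine le_iInf fun f => le_iInf fun hcover => ?_
    by_cases hfA : ∀ i, f i ∈ A₀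
    · -- main σ-subadditivity argument
      set U : ℕ → Set Ω := fun k => ⋃ i ∈ Finset.range k, f i with hU_def
      have hUmem : ∀ k, U k ∈ A₀ := fun k => (hfin f hfA k).1
      set C : ℕ → Set Ω := fun k => B \ U k with hC_def
      have hCmem : ∀ k, C k ∈ A₀ := fun k => hdiffmem B hB (U k) (hUmem k)
      have hUmono : Monotone U := by
        intro j k hjk
        exact Set.biUnion_subset_biUnion_left (Finset.range_subset_range.mpr hjk)
      have hCanti : Antitone C := fun j k hjk => Set.diff_subset_diff_right (hUmono hjk)
      have hCempty : (⋂ k, C k) = ∅ := by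
        rw [Set.eq_empty_iff_forall_notMem]
        intro x hx
        have hxB : x ∈ B := (Set.mem_iInter.mp hx 0).1
        obtain ⟨i, hxi⟩ := Set.mem_iUnion.mp (hcover hxB)
        have := (Set.mem_iInter.mp hx (i+1)).2
        exact this (Set.mem_biUnion (Finset.mem_range.mpr (Nat.lt_succ_self i)) hxi)
      have hClim : Tendsto (fun k => μ (C k)) atTop (nhds 0) :=
        part2 C hCmem hCanti hCempty
      have hineq : ∀ k, μ B ≤ (∑ i ∈ Finset.range k, μ (f i)) + μ (C k) := by
        intro k
        have hsplit : B = (B ∩ U k) ∪ C k := by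
          rw [hC_def]; exact (Set.inter_union_diff B (U k)).symm
        have hdis : Disjoint (B ∩ U k) (C k) :=
          Set.disjoint_left.mpr fun x hx hx2 => hx2.2 hx.2
        have h1 : μ B = μ (B ∩ U k) + μ (C k) := by
          conv_lhs => rw [hsplit]
          exact hμ_add _ (hinter B hB _ (hUmem k)) _ (hCmem k) hdis
        have h2 : μ (B ∩ U k) ≤ μ (U k) :=
          hμ_mono _ (hinter B hB _ (hUmem k)) _ (hUmem k) Set.inter_subset_right
        have h3 := (hfin f hfA k).2
        linarith
      -- pass to ENNReal
      have hineq' : ∀ k, ENNReal.ofReal (μ B) ≤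
          (∑' i, m (f i)) + ENNReal.ofReal (μ (C k)) := by
        intro k
        calc ENNReal.ofReal (μ B)
            ≤ ENNReal.ofReal ((∑ i ∈ Finset.range k, μ (f i)) + μ (C k)) :=
              ENNReal.ofReal_le_ofReal (hineq k)
          _ ≤ ENNReal.ofReal (∑ i ∈ Finset.range k, μ (f i)) +
              ENNReal.ofReal (μ (C k)) := ENNReal.ofReal_add_le
          _ ≤ (∑' i, m (f i)) + ENNReal.ofReal (μ (C k)) := by
              gcongr
              calc ENNReal.ofReal (∑ i ∈ Finset.range k, μ (f i))
                  = ∑ i ∈ Finset.range k, ENNReal.ofReal (μ (f i)) :=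
                    ENNReal.ofReal_sum_of_nonneg fun i _ => hμ_nonneg _ (hfA i)
                _ = ∑ i ∈ Finset.range k, m (f i) := by
                    refine Finset.sum_congr rfl fun i _ => (hm_eq _ (hfA i)).symm
                _ ≤ ∑' i, m (f i) := ENNReal.sum_le_tsum _
      have hlim : Tendsto (fun k => (∑' i, m (f i)) + ENNReal.ofReal (μ (C k)))
          atTop (nhds ((∑' i, m (f i)) + 0)) := by
        exact Tendsto.const_add _ (by simpa using ENNReal.tendsto_ofReal hClim)
      have := ge_of_tendsto hlim (Eventually.of_forall hineq')
      simpa using this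
    · push_neg at hfA
      obtain ⟨i, hi⟩ := hfA
      have : (∑' i, m (f i)) = ∞ :=
        ENNReal.tsum_eq_top_of_eq_top ⟨i, extend_eq_top _ hi⟩
      rw [this]; exact le_top
  -- Carathéodory measurability of sets in A₀
  have hcara : ∀ B ∈ A₀, MeasurableSet[ν₀.caratheodory] B := by
    intro B hB
    refine OuterMeasure.ofFunction_caratheodory fun t => ?_
    by_cases ht : t ∈ A₀
    · rw [hm_eq _ ht, hm_eq _ (hinter t ht B hB), hm_eq _ (hdiffmem t ht B hB)]
      rw [← ENNReal.ofReal_add (hμ_nonneg _ (hinter t ht B hB))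
        (hμ_nonneg _ (hdiffmem t ht B hB))]
      refine ENNReal.ofReal_le_ofReal (le_of_eq ?_)
      have hdis : Disjoint (t ∩ B) (t \ B) :=
        Set.disjoint_left.mpr fun x hx hx2 => hx2.2 hx.2
      rw [← hμ_add _ (hinter t ht B hB) _ (hdiffmem t ht B hB) hdis,
        Set.inter_union_diff]
    · have hmt : m t = ∞ := extend_eq_top _ ht
      rw [hmt]; exact le_top
  have hle : MeasurableSpace.generateFrom A₀ ≤ ν₀.caratheodory :=
    MeasurableSpace.generateFrom_le hcara
  set ν : Measure Ω := ν₀.toMeasure hle with hν_def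
  have hν_eq : ∀ B ∈ A₀, ν B = ENNReal.ofReal (μ B) := by
    intro B hB
    rw [hν_def, toMeasure_apply ν₀ hle (MeasurableSpace.measurableSet_generateFrom hB)]
    exact hν₀_eq B hB
  have hνprob : IsProbabilityMeasure ν := by
    constructor
    rw [hν_eq _ huniv, hμ_univ, ENNReal.ofReal_one]
  have hPi : IsPiSystem A₀ := fun s hs t ht _ => hinter s hs t ht
  refine ⟨ν, ⟨hνprob, hν_eq⟩, ?_⟩
  rintro ν' ⟨hν'prob, hν'_eq⟩
  haveI := hν'prob
  haveI := hνprob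
  refine ext_of_generate_finite A₀ rfl hPi (fun s hs => ?_) ?_
  · rw [hν'_eq s hs, hν_eq s hs]
  · rw [hν'_eq _ huniv, hν_eq _ huniv]
end
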